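/- Let μ ∈ ℝ, σ > 0 and α ∈ (0,1). Then the infimum over all probability measures in V_US(μ,σ) of VaR_α (and likewise of VaR⁺_α) equals μ if α ∈ (1/2, 1), equals μ − σ√3·(1−2α) if α ∈ (1/6, 1/2], and equals μ − σ·√(2/(9α)) if α ∈ (0, 1/6]. For α ∈ (1/6,1/2] the infimum of VaR_α is attained by the uniform distribution on [μ − σ√3, μ + σ√3]; for α ∈ (0,1/6] it is attained by the mixture of the uniform distribution on [μ − σ√(1/(2α)), μ + σ√(1/(2α))] and a point mass at μ with weight 1−6α on the point mass. -/

import Mathlib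

open MeasureTheory Set

/-- The cumulative distribution function of a measure on ℝ. -/
noncomputable def cdf' (ν : Measure ℝ) (x : ℝ) : ℝ := (ν (Iic x)).toReal

/-- Left-continuous Value-at-Risk: `F⁻¹(α) = inf {x | F x ≥ α}`. -/
noncomputable def VaR (ν : Measure ℝ) (α : ℝ) : ℝ := sInf {x : ℝ | α ≤ cdf' ν x}

/-- Right-continuous Value-at-Risk: `F⁻¹⁺(α) = sup {x | F x ≤ α}`. -/
noncomputable def VaRp (ν : Measure ℝ) (α : ℝ) : ℝ := sSup {x : ℝ | cdf' ν x ≤ α}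

/-- `V(m,s)`: Borel probability measures on ℝ with mean `m` and variance `s²`. -/
def Vset (m s : ℝ) : Set (Measure ℝ) :=
  {ν | IsProbabilityMeasure ν ∧ (∫ x, x ∂ν) = m ∧ (∫ x, (x - m) ^ 2 ∂ν) = s ^ 2}

/-- Symmetry of a measure about the point `m`. -/
def SymmAbout (ν : Measure ℝ) (m : ℝ) : Prop :=
  ∀ x : ℝ, ν (Iic x) = ν (Ici (2 * m - x))

/-- Unimodality: the cdf is convex on `(-∞, m)` and concave on `(m, ∞)` for some mode `m`. -/
def Unimodal (ν : Measure ℝ) : Prop :=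
  ∃ m : ℝ, ConvexOn ℝ (Iio m) (cdf' ν) ∧ ConcaveOn ℝ (Ioi m) (cdf' ν)

/-- The uniform distribution on the interval `[a, b]`. -/
noncomputable def unif (a b : ℝ) : Measure ℝ :=
  (ENNReal.ofReal (b - a))⁻¹ • volume.restrict (Icc a b)

/-- `V_US(m,s)`: measures in `V(m,s)` that are unimodal and symmetric about `m`. -/
def VsetUS (m s : ℝ) : Set (Measure ℝ) :=
  {ν | ν ∈ Vset m s ∧ Unimodal ν ∧ SymmAbout ν m}

open Filter Topology
open scoped ENNReal NNReal

section Helpers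

variable {ν : Measure ℝ} {m s α : ℝ}

lemma cdf'_nonneg (ν : Measure ℝ) (x : ℝ) : 0 ≤ cdf' ν x := ENNReal.toReal_nonneg

lemma cdf'_mono [IsFiniteMeasure ν] : Monotone (cdf' ν) := fun _ _ h =>
  ENNReal.toReal_mono (measure_ne_top ν _) (measure_mono (Iic_subset_Iic.2 h))

lemma cdf'_le_one [IsProbabilityMeasure ν] (x : ℝ) : cdf' ν x ≤ 1 := by
  have := prob_le_one (μ := ν) (s := Iic x)
  simpa [cdf'] using ENNReal.toReal_mono (by norm_num) this

lemma cdf'_tendsto_one [IsProbabilityMeasure ν] :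
    Tendsto (cdf' ν) atTop (𝓝 1) := by
  have h := tendsto_measure_Iic_atTop (μ := ν)
  rw [measure_univ] at h
  have := (ENNReal.tendsto_toReal (by norm_num : (1:ℝ≥0∞) ≠ ⊤)).comp h
  exact this

lemma exists_lt_cdf' [IsProbabilityMeasure ν] (hα : α < 1) : ∃ x, α < cdf' ν x :=
  (cdf'_tendsto_one.eventually_const_lt hα).exists

lemma cdf'_le_one_sub [IsProbabilityMeasure ν] {x y : ℝ} (hxy : x < y) :
    cdf' ν x ≤ 1 - (ν (Ici y)).toReal := by
  have hdisj : Disjoint (Iic x) (Ici y) := by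
    rw [Set.disjoint_left]; intro z hz hz'
    simp only [mem_Iic, mem_Ici] at hz hz'; linarith
  have hle : ν (Iic x) + ν (Ici y) ≤ 1 := by
    rw [← measure_union hdisj measurableSet_Ici, ← measure_univ (μ := ν)]
    exact measure_mono (subset_univ _)
  have := ENNReal.toReal_mono (by norm_num) hle
  rw [ENNReal.toReal_add (measure_ne_top _ _) (measure_ne_top _ _)] at this
  simp only [ENNReal.toReal_one] at this
  unfold cdf'; linarith

lemma cdf'_tendsto_zero [IsProbabilityMeasure ν] :
    Tendsto (cdf' ν) atBot (𝓝 0) := by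
  have h := tendsto_measure_Ici_atBot (μ := ν)
  rw [measure_univ] at h
  have h1 : Tendsto (fun x : ℝ => (ν (Ici (x + 1))).toReal) atBot (𝓝 1) := by
    have := ((ENNReal.tendsto_toReal (by norm_num : (1:ℝ≥0∞) ≠ ⊤)).comp h).comp
      (tendsto_atBot_add_const_right atBot (1:ℝ) tendsto_id)
    simpa [Function.comp_def] using this
  have h2 : Tendsto (fun x : ℝ => 1 - (ν (Ici (x + 1))).toReal) atBot (𝓝 0) := by
    have := (tendsto_const_nhds (x := (1:ℝ)) (f := (atBot : Filter ℝ))).sub h1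
    simpa using this
  refine tendsto_of_tendsto_of_tendsto_of_le_of_le tendsto_const_nhds h2
    (fun x => cdf'_nonneg ν x) (fun x => cdf'_le_one_sub (by linarith))

lemma symm_le_half [IsProbabilityMeasure ν] (hsym : SymmAbout ν m) {x : ℝ} (hx : x < m) :
    cdf' ν x ≤ 1 / 2 := by
  have hdisj : Disjoint (Iic x) (Ici (2 * m - x)) := by
    rw [Set.disjoint_left]
    intro y hy hy'
    simp only [mem_Iic, mem_Ici] at hy hy'
    linarith
  have hle : ν (Iic x) + ν (Ici (2 * m - x)) ≤ 1 := by
    rw [← measure_union hdisj measurableSet_Ici, ← measure_univ (μ := ν)]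
    exact measure_mono (subset_univ _)
  rw [← hsym x] at hle
  have h2 : (2 : ℝ≥0∞) * ν (Iic x) ≤ 1 := by rw [two_mul]; exact hle
  have := ENNReal.toReal_mono (by norm_num) h2
  rw [ENNReal.toReal_mul] at this
  simp only [ENNReal.toReal_one, ENNReal.toReal_ofNat] at this
  unfold cdf'
  linarith

lemma convexOn_congr {s : Set ℝ} {f g : ℝ → ℝ} (hg : ConvexOn ℝ s g)
    (h : ∀ x ∈ s, f x = g x) : ConvexOn ℝ s f := by
  refine ⟨hg.1, fun x hx y hy a b ha hb hab => ?_⟩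
  rw [h _ hx, h _ hy, h _ (hg.1 hx hy ha hb hab)]
  exact hg.2 hx hy ha hb hab

lemma concaveOn_congr {s : Set ℝ} {f g : ℝ → ℝ} (hg : ConcaveOn ℝ s g)
    (h : ∀ x ∈ s, f x = g x) : ConcaveOn ℝ s f := by
  refine ⟨hg.1, fun x hx y hy a b ha hb hab => ?_⟩
  rw [h _ hx, h _ hy, h _ (hg.1 hx hy ha hb hab)]
  exact hg.2 hx hy ha hb hab

lemma noatom [IsProbabilityMeasure ν] {m' : ℝ} (hcc : ConcaveOn ℝ (Ioi m') (cdf' ν))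
    {y : ℝ} (hy : m' < y) : ν {y} = 0 := by
  set F := cdf' ν with hF
  set a := m' + (y - m') / 3 with ha
  set b := m' + 2 * (y - m') / 3 with hb
  have ham : m' < a := by rw [ha]; linarith
  have hab : a < b := by rw [ha, hb]; linarith
  have hby : b < y := by rw [hb]; linarith
  set C := (F b - F a) / (b - a) with hC
  have key : ∀ ε : ℝ, 0 < ε → ε < y - b → (ν {y}).toReal ≤ ε * C := by
    intro ε hε hεb
    have h1 : ν {y} ≤ ν (Ioc (y - ε) y) := by
      apply measure_mono
      intro z hz
      simp only [mem_singleton_iff] at hz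
      subst hz
      exact ⟨by linarith, le_refl _⟩
    have hsum : ν (Iic (y - ε)) + ν (Ioc (y - ε) y) = ν (Iic y) := by
      rw [← measure_union _ measurableSet_Ioc]
      · rw [Iic_union_Ioc_eq_Iic (by linarith)]
      · exact Iic_disjoint_Ioc le_rfl
    have h2 : (ν (Ioc (y - ε) y)).toReal = F y - F (y - ε) := by
      have := congrArg ENNReal.toReal hsum
      rw [ENNReal.toReal_add (measure_ne_top _ _) (measure_ne_top _ _)] at this
      simp only [hF, cdf']
      linarith
    -- slope inequalities
    have s1 : (F y - F (y - ε)) / (y - (y - ε)) ≤ (F (y - ε) - F b) / (y - ε - b) :=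
      hcc.slope_anti_adjacent (mem_Ioi.2 (by linarith)) (mem_Ioi.2 hy)
        (by linarith) (by linarith)
    have s2 : (F (y - ε) - F b) / (y - ε - b) ≤ (F b - F a) / (b - a) :=
      hcc.slope_anti_adjacent (mem_Ioi.2 ham) (mem_Ioi.2 (by linarith))
        hab (by linarith)
    have hslope : (F y - F (y - ε)) / ε ≤ C := by
      rw [hC]
      calc (F y - F (y - ε)) / ε = (F y - F (y - ε)) / (y - (y - ε)) := by ring_nf
        _ ≤ (F (y - ε) - F b) / (y - ε - b) := s1
        _ ≤ (F b - F a) / (b - a) := s2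
    have h3 : F y - F (y - ε) ≤ ε * C := by
      rw [div_le_iff₀ hε] at hslope
      linarith [hslope]
    calc (ν {y}).toReal ≤ (ν (Ioc (y - ε) y)).toReal :=
          ENNReal.toReal_mono (measure_ne_top _ _) h1
      _ = F y - F (y - ε) := h2
      _ ≤ ε * C := h3
  have hnn : (0:ℝ) ≤ (ν {y}).toReal := ENNReal.toReal_nonneg
  have hle0 : (ν {y}).toReal ≤ 0 := by
    by_contra hc
    push_neg at hc
    rcases le_or_gt C 0 with hC0 | hC0
    · have := key ((y - b) / 2) (by linarith) (by linarith)
      nlinarith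
    · set ε := min ((y - b) / 2) ((ν {y}).toReal / (2 * C)) with hε
      have hε0 : 0 < ε := lt_min (by linarith) (by positivity)
      have hεb : ε < y - b := lt_of_le_of_lt (min_le_left _ _) (by linarith)
      have h4 := key ε hε0 hεb
      have h5 : ε * C ≤ (ν {y}).toReal / (2 * C) * C := by
        apply mul_le_mul_of_nonneg_right (min_le_right _ _) hC0.le
      have h6 : (ν {y}).toReal / (2 * C) * C = (ν {y}).toReal / 2 := by
        field_simp
      linarith
  have : (ν {y}).toReal = 0 := le_antisymm hle0 hnn
  exact (ENNReal.toReal_eq_zero_iff _).1 this |>.resolve_right (measure_ne_top _ _)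

lemma Gconvex (hν : ν ∈ VsetUS m s) : ConvexOn ℝ (Ioi 0) (fun u => cdf' ν (m - u)) := by
  haveI := hν.1.1
  obtain ⟨m', hcx, hcc⟩ := hν.2.1
  have hsym := hν.2.2
  rcases le_or_gt m m' with hm | hm
  · refine ⟨convex_Ioi 0, fun u hu v hv a b ha hb hab => ?_⟩
    simp only [smul_eq_mul]
    have h1 : m - u ∈ Iio m' := by
      simp only [mem_Iio]; have := mem_Ioi.1 hu; linarith
    have h2 : m - v ∈ Iio m' := by
      simp only [mem_Iio]; have := mem_Ioi.1 hv; linarith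
    have h3 : m - (a * u + b * v) = a * (m - u) + b * (m - v) := by linear_combination (-m) * hab
    rw [h3]
    have := hcx.2 h1 h2 ha hb hab
    simpa [smul_eq_mul] using this
  · have hG : ∀ u ∈ Ioi (0:ℝ), cdf' ν (m - u) = 1 - cdf' ν (m + u) := by
      intro u hu
      have hu0 : (0:ℝ) < u := mem_Ioi.1 hu
      have hatom : ν {m + u} = 0 := noatom hcc (by linarith)
      have h1 : ν (Iic (m - u)) = ν (Ici (m + u)) := by
        have h := hsym (m - u)
        rw [h]
        congr 1
        ring_nf
      have h2 : ν (Ici (m + u)) = 1 - ν (Iio (m + u)) := by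
        rw [← compl_Iio, measure_compl measurableSet_Iio (measure_ne_top _ _), measure_univ]
      have h3 : ν (Iio (m + u)) = ν (Iic (m + u)) := measure_congr (Iio_ae_eq_Iic' hatom)
      unfold cdf'
      rw [h1, h2, h3, ENNReal.toReal_sub_of_le prob_le_one (by norm_num)]
      simp
    refine convexOn_congr ⟨convex_Ioi 0, fun u hu v hv a b ha hb hab => ?_⟩ hG
    simp only [smul_eq_mul]
    have h1 : m + u ∈ Ioi m' := by
      simp only [mem_Ioi]; have := mem_Ioi.1 hu; linarith
    have h2 : m + v ∈ Ioi m' := by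
      simp only [mem_Ioi]; have := mem_Ioi.1 hv; linarith
    have h3 : m + (a * u + b * v) = a * (m + u) + b * (m + v) := by linear_combination (-m) * hab
    rw [h3]
    have := hcc.2 h1 h2 ha hb hab
    simp only [smul_eq_mul] at this
    linarith

lemma exists_subgrad' {G : ℝ → ℝ} (hG : ConvexOn ℝ (Ioi 0) G)
    (hanti : ∀ u v : ℝ, 0 < u → u ≤ v → G v ≤ G u)
    {t : ℝ} (ht : 0 < t) : ∃ k : ℝ, k ≤ 0 ∧ ∀ u, 0 < u → G t + k * (u - t) ≤ G u := by
  have slope3 : ∀ {u v : ℝ}, 0 < u → u < t → t < v →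
      (G t - G u) / (t - u) ≤ (G v - G t) / (v - t) := fun {u v} hu hut htv =>
    hG.slope_mono_adjacent (mem_Ioi.2 hu) (mem_Ioi.2 (by linarith)) hut htv
  set Sl : Set ℝ := (fun u => (G t - G u) / (t - u)) '' Ioo 0 t with hSl
  have hne : Sl.Nonempty := ⟨_, ⟨t / 2, ⟨by linarith, by linarith⟩, rfl⟩⟩
  have hbdd : BddAbove Sl := by
    refine ⟨(G (t + 1) - G t) / (t + 1 - t), ?_⟩
    rintro _ ⟨u, ⟨hu0, hut⟩, rfl⟩
    exact slope3 hu0 hut (by linarith)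
  refine ⟨sSup Sl, ?_, ?_⟩
  · apply csSup_le hne
    rintro _ ⟨u, ⟨hu0, hut⟩, rfl⟩
    apply div_nonpos_of_nonpos_of_nonneg
    · linarith [hanti u t hu0 hut.le]
    · linarith
  · intro u hu0
    rcases lt_trichotomy u t with h | h | h
    · have hle : (G t - G u) / (t - u) ≤ sSup Sl := le_csSup hbdd ⟨u, ⟨hu0, h⟩, rfl⟩
      rw [div_le_iff₀ (by linarith : (0:ℝ) < t - u)] at hle
      nlinarith
    · subst h; simp
    · have hle : sSup Sl ≤ (G u - G t) / (u - t) := by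
        apply csSup_le hne
        rintro _ ⟨w, ⟨hw0, hwt⟩, rfl⟩
        exact slope3 hw0 hwt h
      rw [le_div_iff₀ (by linarith : (0:ℝ) < u - t)] at hle
      nlinarith

lemma exists_subgrad {G : ℝ → ℝ} (hG : ConvexOn ℝ (Ioi 0) G)
    (hanti : ∀ u v : ℝ, 0 < u → u ≤ v → G v ≤ G u)
    {t : ℝ} (ht : 0 < t) : ∃ κ : ℝ, 0 ≤ κ ∧ ∀ u, 0 < u → G t + κ * (t - u) ≤ G u := by
  obtain ⟨k, hk0, hsub⟩ := exists_subgrad' hG hanti ht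
  refine ⟨-k, by linarith, fun u hu => ?_⟩
  have := hsub u hu
  nlinarith [this]

lemma integrable_sq (hν : ν ∈ VsetUS m s) (hs : 0 < s) :
    Integrable (fun x => (x - m) ^ 2) ν := by
  by_contra h
  have := hν.1.2.2
  rw [integral_undef h] at this
  nlinarith

lemma variance_layercake (hν : ν ∈ VsetUS m s) (hs : 0 < s) :
    ENNReal.ofReal (s ^ 2)
      = ∫⁻ u in Ioi (0:ℝ), (ν (Iic (m - u)) + ν (Ici (m + u))) * ENNReal.ofReal (2 * u) := by
  haveI := hν.1.1
  have key := lintegral_comp_eq_lintegral_meas_le_mul (μ := ν) (f := fun x => |x - m|)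
    (g := fun t => 2 * t)
    (Eventually.of_forall fun x => abs_nonneg _)
    ((continuous_abs.comp (continuous_id.sub continuous_const)).measurable.aemeasurable)
    (fun t _ => (continuous_const.mul continuous_id).intervalIntegrable 0 t)
    (ae_restrict_of_forall_mem measurableSet_Ioi (fun t ht => by
      have : (0:ℝ) < t := ht
      positivity))
  have hLHS : ∫⁻ x, ENNReal.ofReal (∫ t in (0:ℝ)..|x - m|, 2 * t) ∂ν
      = ENNReal.ofReal (s ^ 2) := by
    have heval : ∀ x : ℝ, (∫ t in (0:ℝ)..|x - m|, 2 * t) = (x - m) ^ 2 := by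
      intro x
      rw [intervalIntegral.integral_const_mul, integral_id]
      rw [sq_abs]
      ring
    simp_rw [heval]
    rw [← ofReal_integral_eq_lintegral_ofReal (integrable_sq hν hs)
      (Eventually.of_forall fun x => sq_nonneg _), hν.1.2.2]
  have hRHS : ∫⁻ t in Ioi (0:ℝ), ν {a : ℝ | t ≤ |a - m|} * ENNReal.ofReal (2 * t)
      = ∫⁻ u in Ioi (0:ℝ), (ν (Iic (m - u)) + ν (Ici (m + u))) * ENNReal.ofReal (2 * u) := by
    apply setLIntegral_congr_fun measurableSet_Ioi
    intro t ht
    beta_reduce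
    have ht0 : (0:ℝ) < t := ht
    congr 1
    have hset : {a : ℝ | t ≤ |a - m|} = Iic (m - t) ∪ Ici (m + t) := by
      ext a
      simp only [mem_setOf_eq, mem_union, mem_Iic, mem_Ici, le_abs]
      constructor
      · rintro (h | h)
        · right; linarith
        · left; linarith
      · rintro (h | h)
        · right; linarith
        · left; linarith
    rw [hset, measure_union _ measurableSet_Ici]
    rw [Set.disjoint_left]
    intro a ha ha'
    simp only [mem_Iic, mem_Ici] at ha ha'
    linarith
  rw [← hLHS, key, hRHS]

lemma tail_bound (hν : ν ∈ VsetUS m s) (hs : 0 < s) {t : ℝ} (ht : 0 < t)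
    (hα : 0 < α) (hp : α ≤ cdf' ν (m - t)) :
    ∃ q κ : ℝ, 0 < κ ∧ κ * t = q - cdf' ν (m - t) ∧ cdf' ν (m - t) ≤ q ∧ q ≤ 1 / 2 ∧
      2 / 3 * q ^ 3 ≤ s ^ 2 * κ ^ 2 := by
  haveI := hν.1.1
  have hGconv : ConvexOn ℝ (Ioi 0) (fun u => cdf' ν (m - u)) := Gconvex hν
  have hanti : ∀ u v : ℝ, 0 < u → u ≤ v → cdf' ν (m - v) ≤ cdf' ν (m - u) := fun u v _ huv =>
    cdf'_mono (by linarith)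
  obtain ⟨κ, hκ0, hsub⟩ := exists_subgrad hGconv hanti ht
  have hhalf : ∀ u : ℝ, 0 < u → cdf' ν (m - u) ≤ 1 / 2 := fun u hu =>
    symm_le_half hν.2.2 (by linarith)
  have hp0 : 0 < cdf' ν (m - t) := lt_of_lt_of_le hα hp
  -- κ is positive
  have hκpos : 0 < κ := by
    rcases lt_or_eq_of_le hκ0 with h | h
    · exact h
    · exfalso
      have hGge : ∀ u : ℝ, 0 < u → cdf' ν (m - t) ≤ cdf' ν (m - u) := by
        intro u hu
        have h2 := hsub u hu
        rw [← h] at h2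
        simpa using h2
      have htend : Tendsto (fun u : ℝ => cdf' ν (m - u)) atTop (𝓝 0) := by
        apply cdf'_tendsto_zero.comp
        exact tendsto_atBot_add_const_left atTop m (tendsto_neg_atBot_iff.mpr tendsto_id)
      obtain ⟨u, hu, hu2⟩ := ((htend.eventually_lt_const hp0).and
        (eventually_gt_atTop 0)).exists
      exact absurd (hGge u hu2) (not_le.2 hu)
  refine ⟨cdf' ν (m - t) + κ * t, κ, hκpos, by ring, by nlinarith [mul_pos hκpos ht], ?_, ?_⟩
  · -- q ≤ 1/2
    by_contra hq
    push_neg at hq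
    have hqgt : 1 / 2 < cdf' ν (m - t) + κ * t := hq
    set ε := min (t / 2) ((cdf' ν (m - t) + κ * t - 1 / 2) / (2 * κ)) with hε
    have hε0 : 0 < ε := lt_min (by linarith) (div_pos (by linarith) (by linarith))
    have h1 := hsub ε hε0
    have h2 := hhalf ε hε0
    have h3 : κ * ε ≤ (cdf' ν (m - t) + κ * t - 1 / 2) / 2 := by
      have := mul_le_mul_of_nonneg_left (min_le_right (t / 2)
        ((cdf' ν (m - t) + κ * t - 1 / 2) / (2 * κ))) hκpos.le
      calc κ * ε ≤ κ * ((cdf' ν (m - t) + κ * t - 1 / 2) / (2 * κ)) := this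
        _ = (cdf' ν (m - t) + κ * t - 1 / 2) / 2 := by field_simp
    nlinarith [h1, h2, h3]
  · -- variance inequality
    set p := cdf' ν (m - t) with hpdef
    set q := p + κ * t with hqdef
    set u0 := q / κ with hu0def
    have hq0 : 0 < q := by nlinarith [mul_pos hκpos ht]
    have hu0pos : 0 < u0 := div_pos hq0 hκpos
    have hκu0 : κ * u0 = q := by rw [hu0def]; field_simp
    have hpoint : ∀ u ∈ Ioc (0:ℝ) u0,
        ENNReal.ofReal (4 * u * (q - κ * u))
          ≤ (ν (Iic (m - u)) + ν (Ici (m + u))) * ENNReal.ofReal (2 * u) := by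
      intro u hu
      obtain ⟨hu1, hu2⟩ := hu
      have hκuq : κ * u ≤ q := by
        calc κ * u ≤ κ * u0 := mul_le_mul_of_nonneg_left hu2 hκpos.le
          _ = q := hκu0
      have hlnn : 0 ≤ q - κ * u := by linarith
      have hl : q - κ * u ≤ cdf' ν (m - u) := by
        have h5 := hsub u hu1
        have h6 : p + κ * (t - u) = q - κ * u := by rw [hqdef]; ring
        linarith
      have hsymm : ν (Ici (m + u)) = ν (Iic (m - u)) := by
        have h := hν.2.2 (m - u)
        rw [h]; congr 1; ring_nf
      have hIic : ENNReal.ofReal (q - κ * u) ≤ ν (Iic (m - u)) := by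
        refine le_trans (ENNReal.ofReal_le_ofReal hl) ?_
        unfold cdf'
        rw [ENNReal.ofReal_toReal (measure_ne_top _ _)]
      calc ENNReal.ofReal (4 * u * (q - κ * u))
          = (ENNReal.ofReal (q - κ * u) + ENNReal.ofReal (q - κ * u))
              * ENNReal.ofReal (2 * u) := by
            rw [← ENNReal.ofReal_add hlnn hlnn, ← ENNReal.ofReal_mul (by linarith)]
            congr 1; ring
        _ ≤ (ν (Iic (m - u)) + ν (Ici (m + u))) * ENNReal.ofReal (2 * u) := by
            apply mul_le_mul_left
            rw [hsymm]
            exact add_le_add hIic hIic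
    have hmble : Measurable fun u : ℝ =>
        (ν (Iic (m - u)) + ν (Ici (m + u))) * ENNReal.ofReal (2 * u) := by
      apply Measurable.mul
      · apply Measurable.add
        · exact Antitone.measurable (fun x y hxy =>
            measure_mono (Iic_subset_Iic.2 (by linarith)))
        · exact Antitone.measurable (fun x y hxy =>
            measure_mono (Ici_subset_Ici.2 (by linarith)))
      · exact (ENNReal.measurable_ofReal).comp (measurable_const.mul measurable_id)
    have hchain : ENNReal.ofReal (∫ u in Ioc (0:ℝ) u0, 4 * u * (q - κ * u))
        ≤ ENNReal.ofReal (s ^ 2) := by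
      rw [ofReal_integral_eq_lintegral_ofReal]
      · calc ∫⁻ u in Ioc (0:ℝ) u0, ENNReal.ofReal (4 * u * (q - κ * u))
            ≤ ∫⁻ u in Ioc (0:ℝ) u0,
                (ν (Iic (m - u)) + ν (Ici (m + u))) * ENNReal.ofReal (2 * u) :=
              setLIntegral_mono hmble hpoint
          _ ≤ ∫⁻ u in Ioi (0:ℝ),
                (ν (Iic (m - u)) + ν (Ici (m + u))) * ENNReal.ofReal (2 * u) :=
              lintegral_mono_set (fun x hx => hx.1)
          _ = ENNReal.ofReal (s ^ 2) := (variance_layercake hν hs).symm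
      · apply (Continuous.integrableOn_Icc (by continuity)).mono_set Ioc_subset_Icc_self
      · apply ae_restrict_of_forall_mem measurableSet_Ioc
        intro u hu
        have h1 : 0 < u := hu.1
        have h2 : κ * u ≤ q := by
          calc κ * u ≤ κ * u0 := mul_le_mul_of_nonneg_left hu.2 hκpos.le
            _ = q := hκu0
        have h3 : 0 ≤ q - κ * u := by linarith
        have h4 : (0:ℝ) ≤ 4 * u := by linarith
        exact mul_nonneg h4 h3
    have hint : ∫ u in Ioc (0:ℝ) u0, 4 * u * (q - κ * u) = 2 / 3 * q ^ 3 / κ ^ 2 := by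
      rw [← intervalIntegral.integral_of_le hu0pos.le]
      have heq : ∀ u : ℝ, 4 * u * (q - κ * u) = 4 * q * u - 4 * κ * u ^ 2 := fun u => by ring
      simp_rw [heq]
      rw [intervalIntegral.integral_sub, intervalIntegral.integral_const_mul,
        intervalIntegral.integral_const_mul, integral_id, integral_pow]
      · rw [hu0def]
        field_simp [hκpos.ne']
        linear_combination (-24 * q ^ 3 * (κ ^ 2 * κ⁻¹ ^ 2 + κ * κ⁻¹ + 1)) * mul_inv_cancel₀ hκpos.ne'
      · exact ((continuous_const.mul continuous_id).intervalIntegrable 0 u0)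
      · exact IntervalIntegrable.const_mul (intervalIntegral.intervalIntegrable_pow 2) _
    rw [hint] at hchain
    have hreal : 2 / 3 * q ^ 3 / κ ^ 2 ≤ s ^ 2 :=
      (ENNReal.ofReal_le_ofReal_iff (by positivity)).1 hchain
    calc 2 / 3 * q ^ 3 = (2 / 3 * q ^ 3 / κ ^ 2) * κ ^ 2 := by field_simp
      _ ≤ s ^ 2 * κ ^ 2 := mul_le_mul_of_nonneg_right hreal (sq_nonneg _)

lemma key_mid {q α : ℝ} (hα6 : 1 / 6 ≤ α) (hαq : α ≤ q) (hq : q ≤ 1 / 2) :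
    (q - α) ^ 2 ≤ 2 * (1 - 2 * α) ^ 2 * q ^ 3 := by
  rcases eq_or_lt_of_le hαq with h | h
  · subst h
    have : (0:ℝ) ≤ 2 * (1 - 2 * α) ^ 2 * α ^ 3 := by positivity
    simpa using this
  · have hq6 : 1 / 6 < q := lt_of_le_of_lt hα6 h
    have c2 : (0:ℝ) ≤ 8 / 9 * q ^ 3 - (q - 1 / 6) ^ 2 := by
      nlinarith [mul_nonneg (sq_nonneg (q - 1 / 2)) (by linarith : (0:ℝ) ≤ q - 1 / 8)]
    have c3 : (0:ℝ) ≤ 2 * q ^ 3 * (1 - 2 * q) ^ 2 := by positivity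
    have c1 : (0:ℝ) ≤ (α - 1 / 6) * (q - α) * (1 - 8 * q ^ 3) := by
      apply mul_nonneg (mul_nonneg (by linarith) (by linarith))
      nlinarith [hq, hq6]
    nlinarith [mul_nonneg (by linarith : (0:ℝ) ≤ q - α) c2,
      mul_nonneg (by linarith : (0:ℝ) ≤ α - 1 / 6) c3,
      mul_nonneg c1 (by linarith : (0:ℝ) ≤ q - 1 / 6), hq6]

lemma key_low {p q : ℝ} (hp : 0 < p) (hpq : p ≤ q) : 27 * p * (q - p) ^ 2 ≤ 4 * q ^ 3 := by
  nlinarith [mul_nonneg (sq_nonneg (q - 3 * p)) (by linarith : (0:ℝ) ≤ 4 * q - 3 * p)]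

lemma alg_mid {s α p q κ t : ℝ} (hs : 0 < s) (hα6 : 1 / 6 < α) (hα2 : α ≤ 1 / 2)
    (hκ : 0 < κ) (ht : 0 < t) (hp : α ≤ p) (hq : p ≤ q) (hqh : q ≤ 1 / 2)
    (hqt : κ * t = q - p) (hvar : 2 / 3 * q ^ 3 ≤ s ^ 2 * κ ^ 2) :
    t ≤ Real.sqrt 3 * s * (1 - 2 * α) := by
  have hq0 : 0 < q := by linarith
  have hkey := key_mid hα6.le (le_trans hp hq) hqh
  have h1 : (q - p) ^ 2 ≤ (q - α) ^ 2 := by nlinarith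
  -- t^2 * (2/3 * q^3) ≤ t^2 * (s^2 * κ^2) = s^2 * (κ t)^2 ≤ s^2 * 2 (1-2α)^2 q^3
  have h2 : t ^ 2 * (2 / 3 * q ^ 3) ≤ s ^ 2 * (2 * (1 - 2 * α) ^ 2 * q ^ 3) := by
    have e1 : t ^ 2 * (s ^ 2 * κ ^ 2) = s ^ 2 * (κ * t) ^ 2 := by ring
    have e2 : t ^ 2 * (2 / 3 * q ^ 3) ≤ t ^ 2 * (s ^ 2 * κ ^ 2) :=
      mul_le_mul_of_nonneg_left hvar (sq_nonneg t)
    rw [e1, hqt] at e2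
    have e3 : s ^ 2 * (q - p) ^ 2 ≤ s ^ 2 * (2 * (1 - 2 * α) ^ 2 * q ^ 3) := by
      apply mul_le_mul_of_nonneg_left _ (sq_nonneg s)
      exact le_trans h1 hkey
    linarith
  have h3 : t ^ 2 ≤ 3 * (s * (1 - 2 * α)) ^ 2 := by
    have e4 : s ^ 2 * (2 * (1 - 2 * α) ^ 2 * q ^ 3)
        = (3 * (s * (1 - 2 * α)) ^ 2) * (2 / 3 * q ^ 3) := by ring
    rw [e4] at h2
    exact le_of_mul_le_mul_right h2 (by positivity)
  have h4 : t ≤ Real.sqrt (3 * (s * (1 - 2 * α)) ^ 2) := by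
    rw [← Real.sqrt_sq ht.le]
    exact Real.sqrt_le_sqrt h3
  rw [Real.sqrt_mul (by norm_num) _, Real.sqrt_sq (by nlinarith : 0 ≤ s * (1 - 2 * α))] at h4
  linarith [h4]

lemma alg_low {s α p q κ t : ℝ} (hs : 0 < s) (hα0 : 0 < α) (hα6 : α ≤ 1 / 6)
    (hκ : 0 < κ) (ht : 0 < t) (hp : α ≤ p) (hq : p ≤ q) (hqh : q ≤ 1 / 2)
    (hqt : κ * t = q - p) (hvar : 2 / 3 * q ^ 3 ≤ s ^ 2 * κ ^ 2) :
    t ≤ s * Real.sqrt (2 / (9 * α)) := by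
  have hp0 : 0 < p := lt_of_lt_of_le hα0 hp
  have hq0 : 0 < q := by linarith
  have hkey := key_low hp0 hq
  -- 18 p q^3 t^2 ≤ 27 p s^2 (q-p)^2 ≤ 4 q^3 s^2  so  t^2 ≤ 2 s^2/(9 p) ≤ 2 s^2/(9 α)
  have h2 : t ^ 2 * (2 / 3 * q ^ 3) ≤ s ^ 2 * (q - p) ^ 2 := by
    have e1 : t ^ 2 * (s ^ 2 * κ ^ 2) = s ^ 2 * (κ * t) ^ 2 := by ring
    have e2 := mul_le_mul_of_nonneg_left hvar (sq_nonneg t)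
    rw [e1, hqt] at e2
    linarith
  have h3 : t ^ 2 ≤ 2 * s ^ 2 / (9 * p) := by
    rw [le_div_iff₀ (by positivity)]
    have h27 := mul_le_mul_of_nonneg_left h2 (by positivity : (0:ℝ) ≤ 27 * p)
    have h4 : 27 * p * (s ^ 2 * (q - p) ^ 2) = s ^ 2 * (27 * p * (q - p) ^ 2) := by ring
    have h5 : s ^ 2 * (27 * p * (q - p) ^ 2) ≤ s ^ 2 * (4 * q ^ 3) :=
      mul_le_mul_of_nonneg_left hkey (sq_nonneg s)
    -- 27 p t^2 (2/3 q^3) ≤ 4 s^2 q^3  ⇒ 18 p t^2 q^3 ≤ 4 s^2 q^3 ⇒ t^2 * 9p ≤ 2 s^2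
    have h6 : t ^ 2 * (9 * p) * q ^ 3 ≤ 2 * s ^ 2 * q ^ 3 := by nlinarith
    exact le_of_mul_le_mul_right h6 (by positivity)
  have h7 : t ^ 2 ≤ 2 * s ^ 2 / (9 * α) := by
    apply le_trans h3
    apply div_le_div_of_nonneg_left (by positivity) (by positivity) (by nlinarith)
  have h8 : t ≤ Real.sqrt (2 * s ^ 2 / (9 * α)) := by
    rw [← Real.sqrt_sq ht.le]
    exact Real.sqrt_le_sqrt h7
  have h9 : Real.sqrt (2 * s ^ 2 / (9 * α)) = s * Real.sqrt (2 / (9 * α)) := by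
    rw [show 2 * s ^ 2 / (9 * α) = s ^ 2 * (2 / (9 * α)) by ring,
      Real.sqrt_mul (sq_nonneg s), Real.sqrt_sq hs.le]
  linarith

lemma cdf_ge_high (hν : ν ∈ VsetUS m s) (hα2 : 1 / 2 < α) {x : ℝ}
    (hx : α ≤ cdf' ν x) : m ≤ x := by
  haveI := hν.1.1
  by_contra h
  push_neg at h
  have := symm_le_half hν.2.2 h
  linarith

lemma cdf_ge_mid (hν : ν ∈ VsetUS m s) (hs : 0 < s) (hα6 : 1 / 6 < α) (hα2 : α ≤ 1 / 2)
    {x : ℝ} (hx : α ≤ cdf' ν x) : m - s * Real.sqrt 3 * (1 - 2 * α) ≤ x := by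
  have hsqrt : 0 ≤ Real.sqrt 3 := Real.sqrt_nonneg 3
  rcases le_or_gt m x with h | h
  · nlinarith [mul_nonneg (mul_nonneg hs.le hsqrt) (by linarith : (0:ℝ) ≤ 1 - 2 * α)]
  · set t := m - x with htdef
    have ht : 0 < t := by simp [htdef]; linarith
    have hp : α ≤ cdf' ν (m - t) := by simpa [htdef] using hx
    obtain ⟨q, κ, hκ, hqt, hpq, hqh, hvar⟩ := tail_bound hν hs ht (by linarith) hp
    have := alg_mid hs hα6 hα2 hκ ht hp hpq hqh hqt hvar
    nlinarith [this]

lemma cdf_ge_low (hν : ν ∈ VsetUS m s) (hs : 0 < s) (hα0 : 0 < α) (hα6 : α ≤ 1 / 6)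
    {x : ℝ} (hx : α ≤ cdf' ν x) : m - s * Real.sqrt (2 / (9 * α)) ≤ x := by
  have hsqrt : 0 ≤ Real.sqrt (2 / (9 * α)) := Real.sqrt_nonneg _
  rcases le_or_gt m x with h | h
  · nlinarith [mul_nonneg hs.le hsqrt]
  · set t := m - x with htdef
    have ht : 0 < t := by simp [htdef]; linarith
    have hp : α ≤ cdf' ν (m - t) := by simpa [htdef] using hx
    obtain ⟨q, κ, hκ, hqt, hpq, hqh, hvar⟩ := tail_bound hν hs ht hα0 hp
    have := alg_low hs hα0 hα6 hκ ht hp hpq hqh hqt hvar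
    linarith

lemma VaR_ge {B : ℝ} [IsProbabilityMeasure ν] (hα1 : α < 1)
    (hB : ∀ x, α ≤ cdf' ν x → B ≤ x) : B ≤ VaR ν α := by
  obtain ⟨x, hx⟩ := exists_lt_cdf' (ν := ν) hα1
  exact le_csInf ⟨x, hx.le⟩ hB

lemma VaRp_ge {B : ℝ} [IsProbabilityMeasure ν] (hα1 : α < 1)
    (hB : ∀ x, α ≤ cdf' ν x → B ≤ x) : B ≤ VaRp ν α := by
  obtain ⟨x1, hx1⟩ := exists_lt_cdf' (ν := ν) hα1
  have hsub : Iio B ⊆ {x : ℝ | cdf' ν x ≤ α} := by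
    intro x hx
    simp only [mem_setOf_eq]
    by_contra hc
    push_neg at hc
    exact absurd (hB x hc.le) (not_le.2 hx)
  have hbdd : BddAbove {x : ℝ | cdf' ν x ≤ α} := by
    refine ⟨x1, fun y hy => ?_⟩
    by_contra hc
    push_neg at hc
    have := cdf'_mono (ν := ν) hc.le
    simp only [mem_setOf_eq] at hy
    linarith
  calc B = sSup (Iio B) := (csSup_Iio).symm
    _ ≤ sSup {x : ℝ | cdf' ν x ≤ α} := csSup_le_csSup hbdd ⟨B - 1, by simp⟩ hsub

end Helpers

section UnifMix

variable {m s c w α : ℝ}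

lemma ofReal_inv_mul {c d : ℝ} (hc : 0 < c) :
    (ENNReal.ofReal c)⁻¹ * ENNReal.ofReal d = ENNReal.ofReal (d / c) := by
  rcases le_or_gt d 0 with h | h
  · have h1 : ENNReal.ofReal d = 0 := ENNReal.ofReal_eq_zero.2 h
    have h2 : ENNReal.ofReal (d / c) = 0 :=
      ENNReal.ofReal_eq_zero.2 (div_nonpos_of_nonpos_of_nonneg h hc.le)
    rw [h1, h2, mul_zero]
  · rw [ENNReal.ofReal_div_of_pos hc, div_eq_mul_inv, mul_comm]

lemma unif_apply_Iic (hab : a < b) (x : ℝ) :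
    unif a b (Iic x) = ENNReal.ofReal ((min x b - a) / (b - a)) := by
  unfold unif
  rw [Measure.smul_apply, Measure.restrict_apply measurableSet_Iic]
  have hset : Iic x ∩ Icc a b = Icc a (min x b) := by
    ext y
    simp only [mem_inter_iff, mem_Iic, mem_Icc, le_min_iff]
    constructor
    · rintro ⟨h1, h2, h3⟩; exact ⟨h2, h1, h3⟩
    · rintro ⟨h1, h2, h3⟩; exact ⟨h2, h1, h3⟩
  rw [hset, Real.volume_Icc, smul_eq_mul, ofReal_inv_mul (by linarith)]

lemma unif_apply_Ici (hab : a < b) (x : ℝ) :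
    unif a b (Ici x) = ENNReal.ofReal ((b - max x a) / (b - a)) := by
  unfold unif
  rw [Measure.smul_apply, Measure.restrict_apply measurableSet_Ici]
  have hset : Ici x ∩ Icc a b = Icc (max x a) b := by
    ext y
    simp only [mem_inter_iff, mem_Ici, mem_Icc, max_le_iff]
    constructor
    · rintro ⟨h1, h2, h3⟩; exact ⟨⟨h1, h2⟩, h3⟩
    · rintro ⟨⟨h1, h2⟩, h3⟩; exact ⟨h1, h2, h3⟩
  rw [hset, Real.volume_Icc, smul_eq_mul, ofReal_inv_mul (by linarith)]

lemma isProb_unif (hab : a < b) : IsProbabilityMeasure (unif a b) := by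
  constructor
  unfold unif
  rw [Measure.smul_apply, Measure.restrict_apply MeasurableSet.univ, univ_inter,
    Real.volume_Icc, smul_eq_mul, ENNReal.inv_mul_cancel]
  · exact (ENNReal.ofReal_pos.2 (by linarith)).ne'
  · exact ENNReal.ofReal_ne_top

lemma cdf'_unif (hab : a < b) (x : ℝ) :
    cdf' (unif a b) x = max 0 ((min x b - a) / (b - a)) := by
  unfold cdf'
  rw [unif_apply_Iic hab, ENNReal.toReal_ofReal', max_comm]

lemma integral_unif (hab : a < b) (f : ℝ → ℝ) :
    ∫ x, f x ∂(unif a b) = (b - a)⁻¹ * ∫ x in a..b, f x := by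
  unfold unif
  rw [integral_smul_measure, ENNReal.toReal_inv, ENNReal.toReal_ofReal (by linarith)]
  rw [smul_eq_mul]
  congr 1
  rw [MeasureTheory.integral_Icc_eq_integral_Ioc, ← intervalIntegral.integral_of_le hab.le]

lemma mean_unif (hc : 0 < c) : ∫ x, x ∂(unif (m - c) (m + c)) = m := by
  rw [integral_unif (by linarith) _, integral_id]
  have h2c : m + c - (m - c) = 2 * c := by ring
  rw [h2c]
  field_simp
  ring

lemma var_unif (hc : 0 < c) : ∫ x, (x - m) ^ 2 ∂(unif (m - c) (m + c)) = c ^ 2 / 3 := by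
  rw [integral_unif (by linarith) _]
  rw [intervalIntegral.integral_comp_sub_right (fun x => x ^ 2) m, integral_pow]
  have h2c : m + c - (m - c) = 2 * c := by ring
  have e1 : m - c - m = -c := by ring
  have e2 : m + c - m = c := by ring
  rw [h2c, e1, e2]
  field_simp
  ring

lemma symm_unif (hc : 0 < c) : SymmAbout (unif (m - c) (m + c)) m := by
  intro x
  rw [unif_apply_Iic (by linarith), unif_apply_Ici (by linarith)]
  have : (min x (m + c) - (m - c)) / (m + c - (m - c))
      = (m + c - max (2 * m - x) (m - c)) / (m + c - (m - c)) := by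
    rcases le_total x (m + c) with h | h
    · rw [min_eq_left h, max_eq_left (by linarith)]
      ring
    · rw [min_eq_right h, max_eq_right (by linarith)]
  rw [this]

end UnifMix

section Mix

variable {m s c w α : ℝ}

/-- mixture of a point mass at `m` (weight `1-w`) and uniform on `[m-c, m+c]` (weight `w`). -/
noncomputable def mix (m c w : ℝ) : Measure ℝ :=
  ENNReal.ofReal (1 - w) • Measure.dirac m + ENNReal.ofReal w • unif (m - c) (m + c)

lemma mix_one (m c : ℝ) : mix m c 1 = unif (m - c) (m + c) := by
  unfold mix
  norm_num

lemma isProb_mix (hc : 0 < c) (hw0 : 0 ≤ w) (hw1 : w ≤ 1) :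
    IsProbabilityMeasure (mix m c w) := by
  haveI := isProb_unif (show m - c < m + c by linarith)
  constructor
  unfold mix
  rw [Measure.add_apply, Measure.smul_apply, Measure.smul_apply, measure_univ, measure_univ,
    smul_eq_mul, smul_eq_mul, mul_one, mul_one, ← ENNReal.ofReal_add (by linarith) hw0]
  norm_num

lemma cdf'_mix (hc : 0 < c) (hw0 : 0 ≤ w) (hw1 : w ≤ 1) (x : ℝ) :
    cdf' (mix m c w) x
      = (1 - w) * (if m ≤ x then 1 else 0)
        + w * max 0 ((min x (m + c) - (m - c)) / (2 * c)) := by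
  haveI := isProb_unif (show m - c < m + c by linarith)
  unfold cdf' mix
  rw [Measure.add_apply, Measure.smul_apply, Measure.smul_apply,
    unif_apply_Iic (show m - c < m + c by linarith),
    Measure.dirac_apply' _ measurableSet_Iic]
  have h2c : m + c - (m - c) = 2 * c := by ring
  rw [h2c]
  rw [ENNReal.toReal_add]
  · congr 1
    · rw [smul_eq_mul, ENNReal.toReal_mul, ENNReal.toReal_ofReal (by linarith)]
      congr 1
      by_cases h : m ≤ x
      · simp [indicator, h]
      · simp [indicator, h]
    · rw [smul_eq_mul, ENNReal.toReal_mul, ENNReal.toReal_ofReal hw0,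
        ENNReal.toReal_ofReal', max_comm]
  · by_cases h : m ≤ x <;>
      simp [indicator, h, smul_eq_mul, ENNReal.mul_ne_top, ENNReal.ofReal_ne_top]
  · simp only [smul_eq_mul]
    exact ENNReal.mul_ne_top ENNReal.ofReal_ne_top ENNReal.ofReal_ne_top

end Mix

section Mix2

variable {m s c w α : ℝ}

lemma integrable_dirac' {f : ℝ → ℝ} (hf : Measurable f) (a : ℝ) :
    Integrable f (Measure.dirac a) := by
  refine ⟨hf.aestronglyMeasurable, ?_⟩
  unfold HasFiniteIntegral
  rw [lintegral_dirac' a (by measurability)]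
  exact ENNReal.coe_lt_top

lemma integrable_unif {f : ℝ → ℝ} (hf : Continuous f) (hab : a < b) :
    Integrable f (unif a b) := by
  unfold unif
  exact (hf.integrableOn_Icc).smul_measure (ENNReal.inv_ne_top.2 (ENNReal.ofReal_pos.2 (by linarith)).ne')

lemma integral_mix (hc : 0 < c) (hw0 : 0 ≤ w) (hw1 : w ≤ 1) (f : ℝ → ℝ) (hf : Continuous f) :
    ∫ x, f x ∂(mix m c w) = (1 - w) * f m + w * ∫ x, f x ∂(unif (m - c) (m + c)) := by
  unfold mix
  rw [integral_add_measure ((integrable_dirac' hf.measurable m).smul_measure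
      ENNReal.ofReal_ne_top)
    ((integrable_unif hf (by linarith)).smul_measure ENNReal.ofReal_ne_top)]
  rw [integral_smul_measure, integral_smul_measure, integral_dirac,
    ENNReal.toReal_ofReal (by linarith : (0:ℝ) ≤ 1 - w),
    ENNReal.toReal_ofReal hw0]
  simp [smul_eq_mul]

lemma mean_mix (hc : 0 < c) (hw0 : 0 ≤ w) (hw1 : w ≤ 1) : ∫ x, x ∂(mix m c w) = m := by
  rw [integral_mix hc hw0 hw1 _ continuous_id', mean_unif hc]
  ring

lemma var_mix (hc : 0 < c) (hw0 : 0 ≤ w) (hw1 : w ≤ 1) :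
    ∫ x, (x - m) ^ 2 ∂(mix m c w) = w * c ^ 2 / 3 := by
  rw [integral_mix hc hw0 hw1 _ (by continuity), var_unif hc]
  ring

lemma symm_mix (hc : 0 < c) : SymmAbout (mix m c w) m := by
  intro x
  unfold mix
  rw [Measure.add_apply, Measure.add_apply, Measure.smul_apply, Measure.smul_apply,
    Measure.smul_apply, Measure.smul_apply, symm_unif hc x,
    Measure.dirac_apply' _ measurableSet_Iic, Measure.dirac_apply' _ measurableSet_Ici]
  have : (Iic x).indicator (1 : ℝ → ℝ≥0∞) m = (Ici (2 * m - x)).indicator 1 m := by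
    by_cases h : m ≤ x
    · rw [indicator_of_mem (mem_Iic.2 h), indicator_of_mem (mem_Ici.2 (by linarith))]
    · push_neg at h
      rw [indicator_of_notMem (by simpa using h),
        indicator_of_notMem (by simp; linarith)]
  rw [this]

end Mix2

section Mix3

variable {m s c w α : ℝ}

lemma affine_eq (hc : 0 < c) (x y a b : ℝ) (hab : a + b = 1) :
    (a * x + b * y - (m - c)) / (2 * c)
      = a * ((x - (m - c)) / (2 * c)) + b * ((y - (m - c)) / (2 * c)) := by
  have hb : b = 1 - a := by linarith
  subst hb
  field_simp
  ring

lemma affine_convexOn (hc : 0 < c) :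
    ConvexOn ℝ (univ : Set ℝ) (fun x : ℝ => (x - (m - c)) / (2 * c)) := by
  refine ⟨convex_univ, fun x _ y _ a b ha hb hab => le_of_eq ?_⟩
  simp only [smul_eq_mul]
  exact affine_eq hc x y a b hab

lemma affine_concaveOn (hc : 0 < c) :
    ConcaveOn ℝ (univ : Set ℝ) (fun x : ℝ => (x - (m - c)) / (2 * c)) := by
  refine ⟨convex_univ, fun x _ y _ a b ha hb hab => ge_of_eq ?_⟩
  simp only [smul_eq_mul]
  exact affine_eq hc x y a b hab

lemma unimodal_mix (hc : 0 < c) (hw0 : 0 ≤ w) (hw1 : w ≤ 1) : Unimodal (mix m c w) := by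
  refine ⟨m, ?_, ?_⟩
  · -- convex on Iio m
    have hg : ConvexOn ℝ (Iio m) (fun x : ℝ => w * max 0 ((x - (m - c)) / (2 * c))) :=
      (((convexOn_const (0:ℝ) convex_univ).sup (affine_convexOn hc)).smul hw0).subset
        (subset_univ _) (convex_Iio m)
    refine convexOn_congr hg ?_
    intro x hx
    have hx' : x < m := hx
    rw [cdf'_mix hc hw0 hw1, if_neg (by linarith), min_eq_left (by linarith)]
    ring
  · -- concave on Ioi m
    have hg : ConcaveOn ℝ (Ioi m)
        (fun x : ℝ => (1 - w) + w * min ((x - (m - c)) / (2 * c)) 1) := by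
      have h1 : ConcaveOn ℝ (univ : Set ℝ) (fun x : ℝ => min ((x - (m - c)) / (2 * c)) 1) :=
        (affine_concaveOn hc).inf (concaveOn_const (1:ℝ) convex_univ)
      have h2 := (h1.smul hw0).add_const (1 - w)
      have h3 : ConcaveOn ℝ (univ : Set ℝ)
          (fun x : ℝ => (1 - w) + w * min ((x - (m - c)) / (2 * c)) 1) := by
        refine concaveOn_congr h2 ?_
        intro x _
        simp only [Pi.add_apply, smul_eq_mul]
        ring
      exact h3.subset (subset_univ _) (convex_Ioi m)
    refine concaveOn_congr hg ?_
    intro x hx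
    have hx' : m < x := hx
    rw [cdf'_mix hc hw0 hw1, if_pos (by linarith)]
    have hmax : max 0 ((min x (m + c) - (m - c)) / (2 * c))
        = min ((x - (m - c)) / (2 * c)) 1 := by
      rcases le_total x (m + c) with h | h
      · rw [min_eq_left h,
          max_eq_right (div_nonneg (by linarith) (by linarith)),
          min_eq_left (div_le_one_of_le₀ (by linarith) (by linarith))]
      · have h2c : (m + c - (m - c)) / (2 * c) = 1 := by
          rw [show m + c - (m - c) = 2 * c by ring, div_self (by linarith : (2:ℝ) * c ≠ 0)]
        rw [min_eq_right h, h2c, max_eq_right zero_le_one,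
          min_eq_right ((le_div_iff₀ (by linarith : (0:ℝ) < 2 * c)).2 (by linarith))]
    rw [hmax]
    ring

end Mix3

section Mix4

variable {m s c w α : ℝ}

lemma mem_VsetUS_mix (hc : 0 < c) (hw0 : 0 < w) (hw1 : w ≤ 1)
    (hvar : w * c ^ 2 / 3 = s ^ 2) : mix m c w ∈ VsetUS m s :=
  ⟨⟨isProb_mix hc hw0.le hw1, mean_mix hc hw0.le hw1, by rw [var_mix hc hw0.le hw1, hvar]⟩,
    unimodal_mix hc hw0.le hw1, symm_mix hc⟩

lemma VaR_eq_of {ν : Measure ℝ} {x0 : ℝ}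
    (hi : ∀ x, x0 ≤ x → α ≤ cdf' ν x) (hii : ∀ x, x < x0 → cdf' ν x < α) :
    VaR ν α = x0 := by
  have hset : {x : ℝ | α ≤ cdf' ν x} = Ici x0 := by
    ext x
    simp only [mem_setOf_eq, mem_Ici]
    constructor
    · intro h
      by_contra hc
      push_neg at hc
      exact absurd h (not_le.2 (hii x hc))
    · exact hi x
  rw [VaR, hset, csInf_Ici]

lemma VaRp_eq_of {ν : Measure ℝ} {x0 : ℝ}
    (hii : ∀ x, x < x0 → cdf' ν x < α) (hiii : ∀ x, x0 < x → α < cdf' ν x) :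
    VaRp ν α = x0 := by
  unfold VaRp
  apply le_antisymm
  · have hne : {x : ℝ | cdf' ν x ≤ α}.Nonempty := ⟨x0 - 1, (hii _ (by linarith)).le⟩
    apply csSup_le hne
    intro y hy
    by_contra hc
    push_neg at hc
    exact absurd hy (not_le.2 (hiii y hc))
  · have hsub : Iio x0 ⊆ {x : ℝ | cdf' ν x ≤ α} := fun x hx => (hii x hx).le
    have hbdd : BddAbove {x : ℝ | cdf' ν x ≤ α} := by
      refine ⟨x0, fun y hy => ?_⟩
      by_contra hc
      push_neg at hc
      exact absurd hy (not_le.2 (hiii y hc))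
    calc x0 = sSup (Iio x0) := csSup_Iio.symm
      _ ≤ sSup {x : ℝ | cdf' ν x ≤ α} := csSup_le_csSup hbdd ⟨x0 - 1, by simp⟩ hsub

-- Case A : 2α ≤ w
lemma mixA_i (hc : 0 < c) (hw0 : 0 < w) (hw1 : w ≤ 1) (hα0 : 0 < α) (h2α : 2 * α ≤ w)
    {x : ℝ} (hx : m - c + 2 * c * α / w ≤ x) : α ≤ cdf' (mix m c w) x := by
  rw [cdf'_mix hc hw0.le hw1]
  have hind : (0:ℝ) ≤ (1 - w) * (if m ≤ x then 1 else 0) := by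
    split <;> nlinarith
  have hmin : 2 * c * α / w ≤ min x (m + c) - (m - c) := by
    rcases le_total x (m + c) with h | h
    · rw [min_eq_left h]; linarith
    · rw [min_eq_right h]
      have : 2 * c * α / w ≤ c := by
        rw [div_le_iff₀ hw0]; nlinarith
      linarith
  have h1 : α ≤ w * ((min x (m + c) - (m - c)) / (2 * c)) := by
    rw [mul_div_assoc'] at *
    rw [le_div_iff₀ (by linarith : (0:ℝ) < 2 * c)] at *
    calc α * (2 * c) = w * (2 * c * α / w) := by field_simp
      _ ≤ w * (min x (m + c) - (m - c)) := by
          exact mul_le_mul_of_nonneg_left hmin hw0.le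
  have h2 : w * ((min x (m + c) - (m - c)) / (2 * c))
      ≤ w * max 0 ((min x (m + c) - (m - c)) / (2 * c)) :=
    mul_le_mul_of_nonneg_left (le_max_right _ _) hw0.le
  linarith

lemma mixA_ii (hc : 0 < c) (hw0 : 0 < w) (hw1 : w ≤ 1) (hα0 : 0 < α) (h2α : 2 * α ≤ w)
    {x : ℝ} (hx : x < m - c + 2 * c * α / w) : cdf' (mix m c w) x < α := by
  have hx0m : m - c + 2 * c * α / w ≤ m := by
    have : 2 * c * α / w ≤ c := by
      rw [div_le_iff₀ hw0]; nlinarith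
    linarith
  rw [cdf'_mix hc hw0.le hw1, if_neg (by linarith), min_eq_left (by linarith)]
  have hr : (x - (m - c)) / (2 * c) < α / w := by
    rw [div_lt_div_iff₀ (by linarith) hw0]
    nlinarith [mul_lt_mul_of_pos_right hx hw0, div_mul_cancel₀ (2 * c * α) hw0.ne']
  have hmax : max 0 ((x - (m - c)) / (2 * c)) < α / w :=
    max_lt (by positivity) hr
  have := mul_lt_mul_of_pos_left hmax hw0
  rw [mul_div_cancel₀ _ hw0.ne'] at this
  linarith

lemma mixA_iii (hc : 0 < c) (hw0 : 0 < w) (hw1 : w ≤ 1) (hα0 : 0 < α) (hα1 : α < 1)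
    (h2α : 2 * α ≤ w) {x : ℝ} (hx : m - c + 2 * c * α / w < x) :
    α < cdf' (mix m c w) x := by
  rw [cdf'_mix hc hw0.le hw1]
  have hind : (0:ℝ) ≤ (1 - w) * (if m ≤ x then 1 else 0) := by
    split <;> nlinarith
  rcases lt_or_ge x (m + c) with h | h
  · rw [min_eq_left h.le]
    have hr : α / w < (x - (m - c)) / (2 * c) := by
      rw [div_lt_div_iff₀ hw0 (by linarith)]
      nlinarith [mul_lt_mul_of_pos_right hx hw0, div_mul_cancel₀ (2 * c * α) hw0.ne']
    have hmax : α / w < max 0 ((x - (m - c)) / (2 * c)) := lt_max_of_lt_right hr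
    have := mul_lt_mul_of_pos_left hmax hw0
    rw [mul_div_cancel₀ _ hw0.ne'] at this
    linarith
  · -- x ≥ m + c : cdf = 1
    rw [min_eq_right h]
    have hx0m : m - c + 2 * c * α / w ≤ m := by
      have : 2 * c * α / w ≤ c := by
        rw [div_le_iff₀ hw0]; nlinarith
      linarith
    have hmx : m ≤ x := by linarith
    rw [if_pos hmx]
    have h2c : (m + c - (m - c)) / (2 * c) = 1 := by
      rw [show m + c - (m - c) = 2 * c by ring, div_self (by linarith : (2:ℝ) * c ≠ 0)]
    rw [h2c, max_eq_right zero_le_one]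
    nlinarith

-- Case B : α > 1/2, w = 2*(1-α)
lemma mixB_i (hc : 0 < c) (hα2 : 1 / 2 < α) (hα1 : α < 1)
    {x : ℝ} (hx : m ≤ x) : α ≤ cdf' (mix m c (2 * (1 - α))) x := by
  rw [cdf'_mix hc (by linarith) (by linarith), if_pos hx]
  have hmin : c ≤ min x (m + c) - (m - c) := by
    rcases le_total x (m + c) with h | h
    · rw [min_eq_left h]; linarith
    · rw [min_eq_right h]; linarith
  have h1 : (1:ℝ) / 2 ≤ (min x (m + c) - (m - c)) / (2 * c) := by
    rw [le_div_iff₀ (by linarith : (0:ℝ) < 2 * c)]; linarith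
  have h2 : (1:ℝ) / 2 ≤ max 0 ((min x (m + c) - (m - c)) / (2 * c)) :=
    le_max_of_le_right h1
  nlinarith [h2]

lemma mixB_ii (hc : 0 < c) (hα2 : 1 / 2 < α) (hα1 : α < 1)
    {x : ℝ} (hx : x < m) : cdf' (mix m c (2 * (1 - α))) x < α := by
  rw [cdf'_mix hc (by linarith) (by linarith), if_neg (by linarith),
    min_eq_left (by linarith)]
  have hr : (x - (m - c)) / (2 * c) < 1 / 2 := by
    rw [div_lt_div_iff₀ (by linarith) (by norm_num)]
    linarith
  have hmax : max 0 ((x - (m - c)) / (2 * c)) < 1 / 2 := max_lt (by norm_num) hr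
  nlinarith [hmax]

lemma mixB_iii (hc : 0 < c) (hα2 : 1 / 2 < α) (hα1 : α < 1)
    {x : ℝ} (hx : m < x) : α < cdf' (mix m c (2 * (1 - α))) x := by
  rw [cdf'_mix hc (by linarith) (by linarith), if_pos hx.le]
  rcases lt_or_ge x (m + c) with h | h
  · rw [min_eq_left h.le]
    have hr : (1:ℝ) / 2 < (x - (m - c)) / (2 * c) := by
      rw [div_lt_div_iff₀ (by norm_num) (by linarith : (0:ℝ) < 2 * c)]
      linarith
    have hmax : (1:ℝ) / 2 < max 0 ((x - (m - c)) / (2 * c)) := lt_max_of_lt_right hr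
    nlinarith [hmax]
  · rw [min_eq_right h]
    have h2c : (m + c - (m - c)) / (2 * c) = 1 := by
      rw [show m + c - (m - c) = 2 * c by ring, div_self (by linarith : (2:ℝ) * c ≠ 0)]
    rw [h2c, max_eq_right zero_le_one]
    nlinarith

end Mix4


section Final

variable {m s α : ℝ}

lemma sInf_image_eq {B : ℝ} {F : Measure ℝ → ℝ}
    (hlb : ∀ y ∈ F '' VsetUS m s, B ≤ y)
    (hw : ∃ ν ∈ VsetUS m s, F ν = B) : sInf (F '' VsetUS m s) = B := by
  obtain ⟨ν0, hν0, hF⟩ := hw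
  apply le_antisymm
  · refine csInf_le ⟨B, fun y hy => hlb y hy⟩ ?_
    exact ⟨ν0, hν0, hF⟩
  · exact le_csInf ⟨F ν0, ⟨ν0, hν0, rfl⟩⟩ hlb

/-- Best-case VaR for symmetric unimodal distributions (Proposition 3.4(ii)). -/
theorem best_case_VaR_unimodal_symmetric (m s α : ℝ) (hs : 0 < s) (hα : α ∈ Ioo (0:ℝ) 1) :
    sInf ((fun ν => VaR ν α) '' VsetUS m s)
        = (if (1:ℝ)/2 < α then m
           else if (1:ℝ)/6 < α then m - s * Real.sqrt 3 * (1 - 2 * α)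
           else m - s * Real.sqrt (2 / (9 * α))) ∧
    sInf ((fun ν => VaRp ν α) '' VsetUS m s)
        = (if (1:ℝ)/2 < α then m
           else if (1:ℝ)/6 < α then m - s * Real.sqrt 3 * (1 - 2 * α)
           else m - s * Real.sqrt (2 / (9 * α))) ∧
    ((1:ℝ)/6 < α → α ≤ (1:ℝ)/2 →
      unif (m - s * Real.sqrt 3) (m + s * Real.sqrt 3) ∈ VsetUS m s ∧
      VaR (unif (m - s * Real.sqrt 3) (m + s * Real.sqrt 3)) α
        = m - s * Real.sqrt 3 * (1 - 2 * α)) ∧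
    (α ≤ (1:ℝ)/6 →
      (ENNReal.ofReal (1 - 6 * α) • Measure.dirac m +
        ENNReal.ofReal (6 * α) • unif (m - s * Real.sqrt (1 / (2 * α)))
          (m + s * Real.sqrt (1 / (2 * α)))) ∈ VsetUS m s ∧
      VaR (ENNReal.ofReal (1 - 6 * α) • Measure.dirac m +
        ENNReal.ofReal (6 * α) • unif (m - s * Real.sqrt (1 / (2 * α)))
          (m + s * Real.sqrt (1 / (2 * α)))) α
        = m - s * Real.sqrt (2 / (9 * α))) := by
  obtain ⟨hα0, hα1⟩ := hα
  -- witnesses and facts for the middle regime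
  have hmid : (1:ℝ)/6 < α → α ≤ (1:ℝ)/2 →
      (unif (m - s * Real.sqrt 3) (m + s * Real.sqrt 3) ∈ VsetUS m s ∧
        VaR (unif (m - s * Real.sqrt 3) (m + s * Real.sqrt 3)) α
          = m - s * Real.sqrt 3 * (1 - 2 * α)) ∧
      VaRp (unif (m - s * Real.sqrt 3) (m + s * Real.sqrt 3)) α
          = m - s * Real.sqrt 3 * (1 - 2 * α) := by
    intro hα6 hα2
    set c : ℝ := s * Real.sqrt 3 with hcdef
    have hsq3 : (0:ℝ) < Real.sqrt 3 := Real.sqrt_pos.2 (by norm_num)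
    have hc : 0 < c := by positivity
    have hc2 : c ^ 2 = s ^ 2 * 3 := by
      rw [hcdef, mul_pow, Real.sq_sqrt (by norm_num : (3:ℝ) ≥ 0)]
    have hvar : (1:ℝ) * c ^ 2 / 3 = s ^ 2 := by rw [hc2]; ring
    have hmem : unif (m - c) (m + c) ∈ VsetUS m s := by
      rw [← mix_one m c]
      exact mem_VsetUS_mix hc one_pos le_rfl hvar
    have hx0 : m - c + 2 * c * α / 1 = m - s * Real.sqrt 3 * (1 - 2 * α) := by
      rw [hcdef]; ring
    have h2α : 2 * α ≤ (1:ℝ) := by linarith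
    refine ⟨⟨hmem, ?_⟩, ?_⟩
    · rw [← mix_one m c]
      rw [VaR_eq_of (fun x hx => mixA_i hc one_pos le_rfl hα0 h2α hx)
        (fun x hx => mixA_ii hc one_pos le_rfl hα0 h2α hx)]
      exact hx0
    · rw [← mix_one m c]
      rw [VaRp_eq_of (fun x hx => mixA_ii hc one_pos le_rfl hα0 h2α hx)
        (fun x hx => mixA_iii hc one_pos le_rfl hα0 hα1 h2α hx)]
      exact hx0
  -- witnesses and facts for the low regime
  have hlowW : α ≤ (1:ℝ)/6 →
      ((ENNReal.ofReal (1 - 6 * α) • Measure.dirac m +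
        ENNReal.ofReal (6 * α) • unif (m - s * Real.sqrt (1 / (2 * α)))
          (m + s * Real.sqrt (1 / (2 * α)))) ∈ VsetUS m s ∧
      VaR (ENNReal.ofReal (1 - 6 * α) • Measure.dirac m +
        ENNReal.ofReal (6 * α) • unif (m - s * Real.sqrt (1 / (2 * α)))
          (m + s * Real.sqrt (1 / (2 * α)))) α
        = m - s * Real.sqrt (2 / (9 * α))) ∧
      (α ≤ (1:ℝ)/6 → VaRp (ENNReal.ofReal (1 - 6 * α) • Measure.dirac m +
        ENNReal.ofReal (6 * α) • unif (m - s * Real.sqrt (1 / (2 * α)))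
          (m + s * Real.sqrt (1 / (2 * α)))) α
        = m - s * Real.sqrt (2 / (9 * α))) := by
    intro hα6
    set c : ℝ := s * Real.sqrt (1 / (2 * α)) with hcdef
    have hsqp : (0:ℝ) < Real.sqrt (1 / (2 * α)) := Real.sqrt_pos.2 (by positivity)
    have hc : 0 < c := by positivity
    have hc2 : c ^ 2 = s ^ 2 * (1 / (2 * α)) := by
      rw [hcdef, mul_pow, Real.sq_sqrt (by positivity : (0:ℝ) ≤ 1 / (2 * α))]
    have hw0 : 0 < 6 * α := by linarith
    have hw1 : 6 * α ≤ 1 := by linarith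
    have hvar : 6 * α * c ^ 2 / 3 = s ^ 2 := by
      rw [hc2]; field_simp; ring
    have hmixeq : mix m c (6 * α)
        = ENNReal.ofReal (1 - 6 * α) • Measure.dirac m +
          ENNReal.ofReal (6 * α) • unif (m - c) (m + c) := rfl
    have h2α : 2 * α ≤ 6 * α := by linarith
    have hsqrt_eq : Real.sqrt (2 / (9 * α)) = (2 / 3) * Real.sqrt (1 / (2 * α)) := by
      rw [show (2:ℝ) / (9 * α) = (2/3)^2 * (1 / (2 * α)) by field_simp; ring,
        Real.sqrt_mul (sq_nonneg _), Real.sqrt_sq (by norm_num : (0:ℝ) ≤ 2/3)]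
    have hx0 : m - c + 2 * c * α / (6 * α) = m - s * Real.sqrt (2 / (9 * α)) := by
      rw [hsqrt_eq, hcdef]
      field_simp
      ring
    constructor
    · constructor
      · rw [← hmixeq]
        exact mem_VsetUS_mix hc hw0 hw1 hvar
      · rw [← hmixeq]
        rw [VaR_eq_of (fun x hx => mixA_i hc hw0 hw1 hα0 h2α hx)
          (fun x hx => mixA_ii hc hw0 hw1 hα0 h2α hx)]
        exact hx0
    · intro _
      rw [← hmixeq]
      rw [VaRp_eq_of (fun x hx => mixA_ii hc hw0 hw1 hα0 h2α hx)
        (fun x hx => mixA_iii hc hw0 hw1 hα0 hα1 h2α hx)]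
      exact hx0
  by_cases hc2 : (1:ℝ)/2 < α
  · -- high case
    simp only [if_pos hc2]
    set w : ℝ := 2 * (1 - α) with hwdef
    have hw0 : 0 < w := by rw [hwdef]; linarith
    have hw1 : w ≤ 1 := by rw [hwdef]; linarith
    set c : ℝ := s * Real.sqrt (3 / w) with hcdef
    have hsqp : (0:ℝ) < Real.sqrt (3 / w) := Real.sqrt_pos.2 (by positivity)
    have hc : 0 < c := by positivity
    have hc2' : c ^ 2 = s ^ 2 * (3 / w) := by
      rw [hcdef, mul_pow, Real.sq_sqrt (by positivity : (0:ℝ) ≤ 3 / w)]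
    have hvar : w * c ^ 2 / 3 = s ^ 2 := by
      rw [hc2']; field_simp
    have hmem : mix m c w ∈ VsetUS m s := mem_VsetUS_mix hc hw0 hw1 hvar
    have hVaR : VaR (mix m c w) α = m :=
      VaR_eq_of (fun x hx => mixB_i hc hc2 hα1 hx) (fun x hx => mixB_ii hc hc2 hα1 hx)
    have hVaRp : VaRp (mix m c w) α = m :=
      VaRp_eq_of (fun x hx => mixB_ii hc hc2 hα1 hx) (fun x hx => mixB_iii hc hc2 hα1 hx)
    refine ⟨?_, ?_, fun h1 h2 => absurd hc2 (not_lt.2 h2), fun h6 => absurd hc2 (by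
      push_neg; linarith)⟩
    · refine sInf_image_eq ?_ ⟨mix m c w, hmem, hVaR⟩
      rintro y ⟨ν, hν, rfl⟩
      haveI := hν.1.1
      exact VaR_ge hα1 (fun x hx => cdf_ge_high hν hc2 hx)
    · refine sInf_image_eq ?_ ⟨mix m c w, hmem, hVaRp⟩
      rintro y ⟨ν, hν, rfl⟩
      haveI := hν.1.1
      exact VaRp_ge hα1 (fun x hx => cdf_ge_high hν hc2 hx)
  · push_neg at hc2
    by_cases hc6 : (1:ℝ)/6 < α
    · -- middle case
      simp only [if_neg (not_lt.2 hc2), if_pos hc6]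
      obtain ⟨⟨hmem, hVaR⟩, hVaRp⟩ := hmid hc6 hc2
      refine ⟨?_, ?_, fun _ _ => ⟨hmem, hVaR⟩, fun h6 => absurd hc6 (by push_neg; linarith)⟩
      · refine sInf_image_eq ?_ ⟨_, hmem, hVaR⟩
        rintro y ⟨ν, hν, rfl⟩
        haveI := hν.1.1
        exact VaR_ge hα1 (fun x hx => cdf_ge_mid hν hs hc6 hc2 hx)
      · refine sInf_image_eq ?_ ⟨_, hmem, hVaRp⟩
        rintro y ⟨ν, hν, rfl⟩
        haveI := hν.1.1
        exact VaRp_ge hα1 (fun x hx => cdf_ge_mid hν hs hc6 hc2 hx)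
    · -- low case
      push_neg at hc6
      simp only [if_neg (not_lt.2 hc2), if_neg (not_lt.2 hc6)]
      obtain ⟨⟨hmem, hVaR⟩, hVaRp'⟩ := hlowW hc6
      have hVaRp := hVaRp' hc6
      refine ⟨?_, ?_, fun h6 _ => absurd hc6 (by push_neg; linarith), fun _ => ⟨hmem, hVaR⟩⟩
      · refine sInf_image_eq ?_ ⟨_, hmem, hVaR⟩
        rintro y ⟨ν, hν, rfl⟩
        haveI := hν.1.1
        exact VaR_ge hα1 (fun x hx => cdf_ge_low hν hs hα0 hc6 hx)
      · refine sInf_image_eq ?_ ⟨_, hmem, hVaRp⟩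
        rintro y ⟨ν, hν, rfl⟩
        haveI := hν.1.1
        exact VaRp_ge hα1 (fun x hx => cdf_ge_low hν hs hα0 hc6 hx)

end Final
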